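/- arXiv:math/0410305 — 2 statements merged into one kernel-verified Lean document; each statement's English description precedes it below -/
import Mathlib

section
/- Let K be a number field, O its ring of integers, and consider the groups P_O = O ⋊ O* and P_K = K ⋊ K* (the 'ax+b' groups, with O* and K* acting by multiplication). Then P_O is a Hecke subgroup of P_K: every double coset P_O γ P_O with γ ∈ P_K contains only finitely many right cosets of P_O. -/
open NumberField SemidirectProduct

/-- The action of the multiplicative group `Kˣ` on the additive group of `K`
(written multiplicatively), used to form the `ax+b` group `K ⋊ Kˣ`. -/
def mulActionAut (K : Type*) [Field K] : Kˣ →* MulAut (Multiplicative K) where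
  toFun x := AddEquiv.toMultiplicative (DistribMulAction.toAddAut Kˣ K x)
  map_one' := by ext a; simp
  map_mul' x y := by ext a; simp [mul_smul]

/-- The `ax+b` group `P_K = K ⋊ Kˣ` of a number field `K`. -/
abbrev PK (K : Type*) [Field K] := Multiplicative K ⋊[mulActionAut K] Kˣ

variable (K : Type*) [Field K] [NumberField K]

/-- The subgroup `P_O = 𝓞 K ⋊ (𝓞 K)ˣ` of `P_K`, consisting of the elements whose additive
part is an algebraic integer and whose multiplicative part is a unit of `𝓞 K`. -/
def PO : Subgroup (PK K) where
  carrier := {g | (g.left.toAdd ∈ Set.range (algebraMap (𝓞 K) K)) ∧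
      g.right ∈ (Units.map (algebraMap (𝓞 K) K).toMonoidHom).range}
  one_mem' := by
    constructor
    · exact ⟨0, by simp [SemidirectProduct.one_left]⟩
    · exact ⟨1, by simp⟩
  mul_mem' := by
    rintro a b ⟨⟨m, hm⟩, ⟨u, hu⟩⟩ ⟨⟨n, hn⟩, ⟨v, hv⟩⟩
    constructor
    · refine ⟨m + (u : 𝓞 K) * n, ?_⟩
      have h2 : (a * b).left.toAdd = a.left.toAdd + (a.right : K) * b.left.toAdd := rfl
      have hu' : ((a.right : Kˣ) : K) = algebraMap (𝓞 K) K (u : 𝓞 K) := by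
        rw [← hu]; rfl
      rw [h2, ← hm, ← hn, hu', map_add, map_mul]
    · exact ⟨u * v, by rw [map_mul, hu, hv, SemidirectProduct.mul_right]⟩
  inv_mem' := by
    rintro a ⟨⟨m, hm⟩, ⟨u, hu⟩⟩
    constructor
    · refine ⟨-(((u⁻¹ : (𝓞 K)ˣ) : 𝓞 K) * m), ?_⟩
      have h2 : (a⁻¹).left.toAdd = ((a.right⁻¹ : Kˣ) : K) * (-(a.left.toAdd)) := rfl
      have hu' : ((a.right⁻¹ : Kˣ) : K) =
          algebraMap (𝓞 K) K ((u⁻¹ : (𝓞 K)ˣ) : 𝓞 K) := by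
        rw [← hu, ← map_inv]; rfl
      rw [h2, ← hm, hu', map_neg, map_mul]
      ring
    · exact ⟨u⁻¹, by rw [map_inv, hu, SemidirectProduct.inv_right]⟩

/-- Auxiliary embedding of a pair into `PK`. -/
def eEmb (m : 𝓞 K) (u : (𝓞 K)ˣ) : PK K :=
  ⟨Multiplicative.ofAdd (algebraMap (𝓞 K) K m),
    Units.map (algebraMap (𝓞 K) K).toMonoidHom u⟩

lemma eEmb_mem (m : 𝓞 K) (u : (𝓞 K)ˣ) : eEmb K m u ∈ PO K :=
  ⟨⟨m, rfl⟩, ⟨u, rfl⟩⟩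

lemma coset_congr (g g' : PK K) (hδ : g' * g⁻¹ ∈ PO K) :
    {x : PK K | ∃ h ∈ PO K, x = h * g} = {x : PK K | ∃ h ∈ PO K, x = h * g'} := by
  ext x
  constructor
  · rintro ⟨h, hh, rfl⟩
    exact ⟨h * (g' * g⁻¹)⁻¹, mul_mem hh (inv_mem hδ), by group⟩
  · rintro ⟨h, hh, rfl⟩
    exact ⟨h * (g' * g⁻¹), mul_mem hh hδ, by group⟩

lemma key (γ : PK K) (c : 𝓞 K) (hc : c ≠ 0)
    (β : 𝓞 K) (hβ : algebraMap (𝓞 K) K β = algebraMap (𝓞 K) K c * γ.left.toAdd)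
    (α : 𝓞 K) (hα : algebraMap (𝓞 K) K α = algebraMap (𝓞 K) K c * (γ.right : K))
    (m m' : 𝓞 K) (u u' : (𝓞 K)ˣ)
    (s : 𝓞 K) (hs : (m' : 𝓞 K) - m = c * s)
    (t : 𝓞 K) (ht : ((u' : 𝓞 K) - u) = c * t) :
    (γ * eEmb K m' u') * (γ * eEmb K m u)⁻¹ ∈ PO K := by
  set A := algebraMap (𝓞 K) K with hA
  have ha : ((γ.right : Kˣ) : K) ≠ 0 := Units.ne_zero _
  have hu0 : A (u : 𝓞 K) ≠ 0 :=
    (Units.map (algebraMap (𝓞 K) K).toMonoidHom u).ne_zero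
  have huinv : A ((u⁻¹ : (𝓞 K)ˣ) : 𝓞 K) = (A (u : 𝓞 K))⁻¹ := by
    refine eq_inv_of_mul_eq_one_left ?_
    rw [← map_mul, ← Units.val_mul, inv_mul_cancel, Units.val_one, map_one]
  constructor
  · refine ⟨s * α - ((u⁻¹ : (𝓞 K)ˣ) : 𝓞 K) * t * β
      - ((u⁻¹ : (𝓞 K)ˣ) : 𝓞 K) * t * α * m, ?_⟩
    have h1 : ∀ g g' : PK K, (g * g').left.toAdd
        = g.left.toAdd + ((g.right : Kˣ) : K) * g'.left.toAdd := fun _ _ => rfl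
    have h2 : ∀ g : PK K, (g⁻¹).left.toAdd
        = ((g.right⁻¹ : Kˣ) : K) * (-(g.left.toAdd)) := fun _ => rfl
    have hEl : ∀ (n : 𝓞 K) (v : (𝓞 K)ˣ), (eEmb K n v).left.toAdd = A n := fun _ _ => rfl
    have hEr : ∀ (n : 𝓞 K) (v : (𝓞 K)ˣ),
        (((eEmb K n v).right : Kˣ) : K) = A (v : 𝓞 K) := fun _ _ => rfl
    have hmulr : ∀ g g' : PK K, (g * g').right = g.right * g'.right := fun _ _ => rfl
    have hm' : A (m' : 𝓞 K) = A m + A c * A s := by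
      have := congrArg A hs; rw [map_sub, map_mul] at this; linear_combination this
    have hu' : A ((u' : (𝓞 K)ˣ) : 𝓞 K) = A (u : 𝓞 K) + A c * A t := by
      have := congrArg A ht; rw [map_sub, map_mul] at this; linear_combination this
    have hc0 : A c ≠ 0 := by
      simpa [hA] using (RingOfIntegers.coe_ne_zero_iff (K := K)).mpr hc
    simp only [h1, h2, hmulr, hEl, hEr, Units.val_inv_eq_inv_val, Units.val_mul,
      map_sub, map_mul]
    rw [huinv, hm', hu', hβ, hα]
    field_simp
    ring
  · refine ⟨u' * u⁻¹, ?_⟩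
    have hmulr : ∀ g g' : PK K, (g * g').right = g.right * g'.right := fun _ _ => rfl
    have hinvr : ∀ g : PK K, (g⁻¹).right = g.right⁻¹ := fun _ => rfl
    have hEr : ∀ (n : 𝓞 K) (v : (𝓞 K)ˣ),
        (eEmb K n v).right = Units.map (algebraMap (𝓞 K) K).toMonoidHom v := fun _ _ => rfl
    simp only [hmulr, hinvr, hEr, map_mul, map_inv, mul_inv_rev]
    generalize γ.right = a0
    generalize (Units.map (algebraMap (𝓞 K) K).toMonoidHom u : Kˣ) = w
    generalize (Units.map (algebraMap (𝓞 K) K).toMonoidHom u' : Kˣ) = w'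
    ext
    push_cast
    field_simp

/-- `(P_K, P_O)` is a Hecke pair: every double coset `P_O γ P_O` contains finitely many
right cosets of `P_O`. -/
theorem PO_hecke_in_PK (γ : PK K) :
    Set.Finite ((fun g => {x : PK K | ∃ h ∈ PO K, x = h * g}) ''
      {g : PK K | ∃ h₁ ∈ PO K, ∃ h₂ ∈ PO K, g = h₁ * γ * h₂}) := by
  classical
  obtain ⟨d₁, y₁, hy₁⟩ :=
    IsLocalization.exists_integer_multiple (nonZeroDivisors (𝓞 K)) γ.left.toAdd
  obtain ⟨d₂, y₂, hy₂⟩ :=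
    IsLocalization.exists_integer_multiple (nonZeroDivisors (𝓞 K)) ((γ.right : Kˣ) : K)
  set c : 𝓞 K := (d₁ : 𝓞 K) * (d₂ : 𝓞 K) with hcdef
  have hc : c ≠ 0 :=
    mul_ne_zero (nonZeroDivisors.coe_ne_zero d₁) (nonZeroDivisors.coe_ne_zero d₂)
  have hβ : algebraMap (𝓞 K) K ((d₂ : 𝓞 K) * y₁)
      = algebraMap (𝓞 K) K c * γ.left.toAdd := by
    rw [map_mul, hcdef, map_mul, hy₁, Algebra.smul_def]; ring
  have hα : algebraMap (𝓞 K) K ((d₁ : 𝓞 K) * y₂)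
      = algebraMap (𝓞 K) K c * ((γ.right : Kˣ) : K) := by
    rw [map_mul, hcdef, map_mul, hy₂, Algebra.smul_def]; ring
  set J : Ideal (𝓞 K) := Ideal.span {c} with hJ
  haveI : Fintype ((𝓞 K) ⧸ J) :=
    @Fintype.ofFinite _ (Ideal.finiteQuotientOfFreeOfNeBot J (by
      simpa [hJ, Ideal.span_singleton_eq_bot] using hc))
  haveI hfin1 : Finite ((𝓞 K) ⧸ J) := Finite.of_fintype _
  haveI hfin2 : Finite (((𝓞 K) ⧸ J) × ((𝓞 K) ⧸ J)) := @Finite.instProd _ _ hfin1 hfin1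
  set π : 𝓞 K × (𝓞 K)ˣ → ((𝓞 K) ⧸ J) × ((𝓞 K) ⧸ J) := fun p =>
    (Ideal.Quotient.mk J p.1, Ideal.Quotient.mk J (p.2 : 𝓞 K)) with hπ
  set f : 𝓞 K × (𝓞 K)ˣ → Set (PK K) := fun p =>
    {x | ∃ h ∈ PO K, x = h * (γ * eEmb K p.1 p.2)} with hf
  have hconst : ∀ p p' : 𝓞 K × (𝓞 K)ˣ, π p = π p' → f p = f p' := by
    rintro ⟨m, u⟩ ⟨m', u'⟩ hpq
    have h1 : Ideal.Quotient.mk J m = Ideal.Quotient.mk J m' := congrArg Prod.fst hpq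
    have h2 : Ideal.Quotient.mk J ((u : 𝓞 K)) = Ideal.Quotient.mk J ((u' : 𝓞 K)) :=
      congrArg Prod.snd hpq
    obtain ⟨s, hsv⟩ := Ideal.mem_span_singleton.1 (Ideal.Quotient.eq.1 h1.symm)
    obtain ⟨t, htv⟩ := Ideal.mem_span_singleton.1 (Ideal.Quotient.eq.1 h2.symm)
    exact coset_congr K _ _ (key K γ c hc _ hβ _ hα m m' u u' s hsv t htv)
  set F : ((𝓞 K) ⧸ J) × ((𝓞 K) ⧸ J) → Set (PK K) := fun q =>
    if h : ∃ p, π p = q then f h.choose else ∅ with hF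
  have hFf : ∀ p, f p = F (π p) := by
    intro p
    have hex : ∃ p', π p' = π p := ⟨p, rfl⟩
    rw [hF]
    simp only [dif_pos hex]
    exact (hconst _ _ hex.choose_spec).symm
  apply Set.Finite.subset (Set.finite_range F)
  rintro S ⟨g, ⟨h₁, hh₁, h₂, hh₂, rfl⟩, rfl⟩
  obtain ⟨⟨m, hm⟩, ⟨u, hu⟩⟩ := hh₂
  have hE : eEmb K m u = h₂ := by
    refine SemidirectProduct.ext ?_ ?_
    · show Multiplicative.ofAdd (algebraMap (𝓞 K) K m) = h₂.left
      rw [hm]; exact ofAdd_toAdd _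
    · exact hu
  refine ⟨π (m, u), ?_⟩
  rw [← hFf (m, u), hf]
  simp only
  rw [hE]
  refine coset_congr K (γ * h₂) (h₁ * γ * h₂) ?_
  have : h₁ * γ * h₂ * (γ * h₂)⁻¹ = h₁ := by group
  rw [this]; exact hh₁
end

section
/- Let K be a number field with ring of integers O. The quotient homomorphism K* → K*/O* admits a multiplicative (monoid-homomorphic) cross section s : K*/O* → K* which maps the sub-semigroup of classes of nonzero integers (i.e., principal integral ideals) into the nonzero integers O ∖ {0}. -/
set_option maxHeartbeats 1000000

section Abstract

variable {A B ι : Type*} [AddCommGroup A] [AddCommGroup B]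

/-- The subgroup of `B` of elements whose image under `f` is supported on `S`. -/
private noncomputable def Dsub (f : B →+ (ι →₀ ℤ)) (S : Set ι) : AddSubgroup B :=
  AddSubgroup.comap f ((Finsupp.supported ℤ ℤ S).toAddSubgroup)

private lemma mem_Dsub {f : B →+ (ι →₀ ℤ)} {S : Set ι} {x : B} :
    x ∈ Dsub f S ↔ ↑(f x).support ⊆ S := by
  simp [Dsub, Finsupp.mem_supported]

private lemma Dsub_mono {f : B →+ (ι →₀ ℤ)} {S T : Set ι} (h : S ⊆ T) :
    Dsub f S ≤ Dsub f T := fun x hx => by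
  rw [mem_Dsub] at *
  exact hx.trans h

attribute [irreducible] Dsub

/-- A partial splitting of `π`, defined on the classes supported on `S`. -/
private structure PSplit (π : A →+ B) (f : B →+ (ι →₀ ℤ)) where
  S : Set ι
  σ : Dsub f S →+ A
  hσ : ∀ x : Dsub f S, π (σ x) = x

variable {π : A →+ B} {f : B →+ (ι →₀ ℤ)}

private instance : Preorder (PSplit π f) where
  le p q := ∃ h : p.S ⊆ q.S,
    ∀ x : Dsub f p.S, q.σ (AddSubgroup.inclusion (Dsub_mono h) x) = p.σ x
  le_refl p := ⟨subset_rfl, fun x => congrArg p.σ (Subtype.ext rfl)⟩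
  le_trans p q r h1 h2 := by
    obtain ⟨h1, e1⟩ := h1
    obtain ⟨h2, e2⟩ := h2
    refine ⟨h1.trans h2, fun x => ?_⟩
    rw [show AddSubgroup.inclusion (Dsub_mono (h1.trans h2)) x =
      AddSubgroup.inclusion (Dsub_mono h2) (AddSubgroup.inclusion (Dsub_mono h1) x) from
      Subtype.ext rfl, e2, e1]

private lemma PSplit.sigma_congr (p : PSplit π f) {x y : Dsub f p.S} (h : (x : B) = (y : B)) :
    p.σ x = p.σ y := congrArg p.σ (Subtype.ext h)

private theorem exists_section_of_embeds_finsupp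
    (hπ : Function.Surjective π) (hf : Function.Injective f) :
    ∃ σ : B →+ A, ∀ b, π (σ b) = b := by
  classical
  -- the trivial partial splitting
  have hbot : ∀ x : Dsub f (∅ : Set ι), π ((0 : Dsub f (∅ : Set ι) →+ A) x) = x := by
    intro x
    have hx : (f x).support ⊆ (∅ : Finset ι) := by
      have := mem_Dsub.mp x.2
      simpa using this
    have : f (x : B) = 0 := by
      rwa [Finset.subset_empty, Finsupp.support_eq_empty] at hx
    have : (x : B) = 0 := hf (by simpa using this)
    simp [this]
  haveI : Nonempty (PSplit π f) := ⟨⟨∅, 0, hbot⟩⟩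
  -- Zorn's lemma
  obtain ⟨m, hm⟩ : ∃ m : PSplit π f, IsMax m := by
    apply zorn_le_nonempty
    intro c hc hne
    -- upper bound for the chain `c`
    have hdir : DirectedOn (fun p q : PSplit π f => p.S ⊆ q.S) c :=
      (hc.directedOn).mono (fun p q hpq => hpq.1)
    set Su : Set ι := ⋃ p ∈ c, p.S with hSu
    have hex : ∀ x : Dsub f Su, ∃ p, p ∈ c ∧ (x : B) ∈ Dsub f p.S := by
      intro x
      have hx : ↑(f (x : B)).support ⊆ ⋃ p ∈ c, p.S := mem_Dsub.mp x.2
      obtain ⟨p, hp, hsub⟩ := hdir.exists_mem_subset_of_finset_subset_biUnion hne hx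
      exact ⟨p, hp, mem_Dsub.mpr hsub⟩
    set g : Dsub f Su → A := fun x => (hex x).choose.σ ⟨(x : B), (hex x).choose_spec.2⟩ with hg
    have hindep : ∀ (x : Dsub f Su) (p : PSplit π f), p ∈ c → ∀ hx : (x : B) ∈ Dsub f p.S,
        g x = p.σ ⟨(x : B), hx⟩ := by
      intro x p hp hx
      set q := (hex x).choose with hq
      have hqc : q ∈ c := (hex x).choose_spec.1
      have hxq : (x : B) ∈ Dsub f q.S := (hex x).choose_spec.2
      rcases hc.total hqc hp with ⟨hle, e⟩ | ⟨hle, e⟩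
      · rw [hg]
        simp only
        rw [← e ⟨(x : B), hxq⟩]
        exact p.sigma_congr rfl
      · rw [hg]
        simp only
        rw [← e ⟨(x : B), hx⟩]
        exact q.sigma_congr rfl
    have hadd : ∀ x y : Dsub f Su, g (x + y) = g x + g y := by
      intro x y
      obtain ⟨p, hp, hxp⟩ := hex x
      obtain ⟨q, hq, hyq⟩ := hex y
      obtain ⟨r, hr, hpr, hqr⟩ := hdir p hp q hq
      have hxr : (x : B) ∈ Dsub f r.S := Dsub_mono hpr hxp
      have hyr : (y : B) ∈ Dsub f r.S := Dsub_mono hqr hyq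
      have hxyr : ((x + y : Dsub f Su) : B) ∈ Dsub f r.S := by
        push_cast
        exact add_mem hxr hyr
      rw [hindep (x + y) r hr hxyr, hindep x r hr hxr, hindep y r hr hyr,
        show (⟨((x + y : Dsub f Su) : B), hxyr⟩ : Dsub f r.S) =
          ⟨(x : B), hxr⟩ + ⟨(y : B), hyr⟩ from Subtype.ext rfl, map_add]
    refine ⟨⟨Su, AddMonoidHom.mk' g hadd, ?_⟩, ?_⟩
    · intro x
      obtain ⟨p, hp, hxp⟩ := hex x
      rw [show (AddMonoidHom.mk' g hadd) x = g x from rfl, hindep x p hp hxp, p.hσ]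
    · intro p hp
      refine ⟨Set.subset_biUnion_of_mem (u := PSplit.S) hp, fun x => ?_⟩
      exact (hindep (AddSubgroup.inclusion _ x) p hp x.2).trans (p.sigma_congr rfl)
  -- the maximal partial splitting is defined everywhere
  have hall : ∀ i : ι, i ∈ m.S := by
    intro i
    by_contra hi
    set S' : Set ι := insert i m.S with hS'
    have hiS : m.S ⊆ S' := Set.subset_insert i m.S
    -- key: membership in `Dsub f m.S` from membership in `Dsub f S'` plus vanishing coordinate
    have hcoordmem : ∀ x : B, x ∈ Dsub f S' → f x i = 0 → x ∈ Dsub f m.S := by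
      intro x hx h0
      rw [mem_Dsub] at hx ⊢
      intro j hj
      rcases hx hj with hji | hjm
      · exact absurd (hji ▸ h0) (Finsupp.mem_support_iff.mp hj)
      · exact hjm
    have hcoordzero : ∀ x : B, x ∈ Dsub f m.S → f x i = 0 := by
      intro x hx
      by_contra h0
      exact hi (mem_Dsub.mp hx (Finsupp.mem_support_iff.mpr h0))
    -- the subgroup of `ℤ` of values of the `i`-th coordinate on `Dsub f S'`
    set H : AddSubgroup ℤ := (Dsub f S').map ((Finsupp.applyAddHom i).comp f) with hH
    obtain ⟨g₀, hg₀⟩ := Int.subgroup_cyclic H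
    have hmemH : ∀ x : B, x ∈ Dsub f S' → g₀ ∣ f x i := by
      intro x hx
      have : f x i ∈ H := ⟨x, hx, rfl⟩
      rw [hg₀, AddSubgroup.mem_closure_singleton] at this
      obtain ⟨n, hn⟩ := this
      exact Dvd.intro_left n (by rw [← hn, zsmul_eq_mul]; norm_cast)
    by_cases hg0 : g₀ = 0
    -- case 1 : the new coordinate vanishes identically, extend trivially
    · have hle : Dsub f S' ≤ Dsub f m.S := by
        intro x hx
        refine hcoordmem x hx ?_
        obtain ⟨n, hn⟩ := hmemH x hx
        rw [hn, hg0, zero_mul]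
      have hmle : m ≤ (⟨S', m.σ.comp (AddSubgroup.inclusion hle), fun x => by
          show π (m.σ (AddSubgroup.inclusion hle x)) = ↑x
          rw [m.hσ]; rfl⟩ : PSplit π f) := by
        refine ⟨hiS, fun x => ?_⟩
        show m.σ (AddSubgroup.inclusion hle (AddSubgroup.inclusion (Dsub_mono hiS) x)) = m.σ x
        exact m.sigma_congr rfl
      obtain ⟨hsub, -⟩ := hm hmle
      exact hi (hsub (Set.mem_insert i m.S))
    -- case 2 : pick a generator of the coordinate subgroup and a lift
    · have hg₀H : g₀ ∈ H := by
        rw [hg₀]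
        exact AddSubgroup.mem_closure_singleton.mpr ⟨1, one_zsmul g₀⟩
      obtain ⟨y₀, hy₀S, hy₀⟩ := hg₀H
      obtain ⟨a₀, ha₀⟩ := hπ y₀
      -- the coefficient function
      have hy₀i : f y₀ i = g₀ := hy₀
      set n : Dsub f S' → ℤ := fun y => f (y : B) i / g₀ with hn
      have hnspec : ∀ y : Dsub f S', n y * g₀ = f (y : B) i := fun y =>
        Int.ediv_mul_cancel (hmemH _ y.2)
      have hnadd : ∀ y z : Dsub f S', n (y + z) = n y + n z := by
        intro y z
        apply mul_right_cancel₀ hg0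
        rw [hnspec, add_mul, hnspec, hnspec]
        push_cast
        rw [map_add]
        simp
      have hrem : ∀ y : Dsub f S', (y : B) - n y • y₀ ∈ Dsub f m.S := by
        intro y
        have h1 : (y : B) - n y • y₀ ∈ Dsub f S' :=
          sub_mem y.2 (zsmul_mem hy₀S _)
        refine hcoordmem _ h1 ?_
        rw [map_sub, map_zsmul]
        simp only [Finsupp.coe_sub, Finsupp.coe_smul, Pi.sub_apply, Pi.smul_apply]
        rw [hy₀i, smul_eq_mul, ← hnspec y]
        ring
      set g' : Dsub f S' → A := fun y => m.σ ⟨(y : B) - n y • y₀, hrem y⟩ + n y • a₀ with hg'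
      have gval : ∀ (y : Dsub f S') (c : Dsub f m.S), ((y : B) - n y • y₀ = (c : B)) →
          g' y = m.σ c + n y • a₀ := by
        intro y c hc
        rw [hg']
        simp only
        rw [m.sigma_congr hc]
      have hadd' : ∀ y z : Dsub f S', g' (y + z) = g' y + g' z := by
        intro y z
        have hc : ((y + z : Dsub f S') : B) - n (y + z) • y₀ =
            (((⟨(y : B) - n y • y₀, hrem y⟩ + ⟨(z : B) - n z • y₀, hrem z⟩ :
              Dsub f m.S)) : B) := by
          push_cast
          rw [hnadd, add_smul]
          abel
        rw [gval (y + z) _ hc, map_add, hnadd, add_smul, hg']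
        simp only
        abel
      have hσ' : ∀ y : Dsub f S', π (AddMonoidHom.mk' g' hadd' y) = y := by
        intro y
        show π (g' y) = (y : B)
        rw [hg']
        simp only
        rw [map_add, m.hσ, map_zsmul, ha₀]
        simp
      have hmle : m ≤ (⟨S', AddMonoidHom.mk' g' hadd', hσ'⟩ : PSplit π f) := by
        refine ⟨hiS, fun x => ?_⟩
        show g' (AddSubgroup.inclusion (Dsub_mono hiS) x) = m.σ x
        have hn0 : n (AddSubgroup.inclusion (Dsub_mono hiS) x) = 0 := by
          rw [hn]
          show f ((x : B)) i / g₀ = 0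
          rw [hcoordzero _ x.2, Int.zero_ediv]
        have hc : ((AddSubgroup.inclusion (Dsub_mono hiS) x : Dsub f S') : B) -
            n (AddSubgroup.inclusion (Dsub_mono hiS) x) • y₀ = ((x : Dsub f m.S) : B) := by
          rw [hn0, zero_smul, sub_zero]; rfl
        rw [gval _ x hc, hn0, zero_smul, add_zero]
      obtain ⟨hsub, -⟩ := hm hmle
      exact hi (hsub (Set.mem_insert i m.S))
  -- conclude
  have hmem : ∀ b : B, b ∈ Dsub f m.S := fun b =>
    mem_Dsub.mpr (fun j _ => hall j)
  refine ⟨AddMonoidHom.mk' (fun b => m.σ ⟨b, hmem b⟩) (fun x y => ?_), fun b => ?_⟩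
  · show m.σ ⟨x + y, hmem (x + y)⟩ = m.σ ⟨x, hmem x⟩ + m.σ ⟨y, hmem y⟩
    rw [show (⟨x + y, hmem (x + y)⟩ : Dsub f m.S) = ⟨x, hmem x⟩ + ⟨y, hmem y⟩ from
      Subtype.ext rfl, map_add]
  · exact m.hσ ⟨b, hmem b⟩

end Abstract


open NumberField IsDedekindDomain FractionalIdeal
open scoped nonZeroDivisors

section NF

variable {K : Type*} [Field K] [NumberField K]

noncomputable def cnt (x : Kˣ) : HeightOneSpectrum (𝓞 K) →₀ ℤ :=
  Finsupp.ofSupportFinite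
    (fun v => FractionalIdeal.count K v (spanSingleton (𝓞 K)⁰ (x : K)))
    (by
      have h := FractionalIdeal.finite_factors (R := 𝓞 K) (K := K)
        (spanSingleton (𝓞 K)⁰ (x : K))
      rw [Filter.eventually_cofinite] at h
      exact h)

lemma cnt_apply (x : Kˣ) (v : HeightOneSpectrum (𝓞 K)) :
    cnt x v = FractionalIdeal.count K v (spanSingleton (𝓞 K)⁰ (x : K)) := by
  simp [cnt, Finsupp.ofSupportFinite]
  rfl

lemma span_unit_ne_zero (x : Kˣ) : spanSingleton (𝓞 K)⁰ (x : K) ≠ 0 :=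
  spanSingleton_ne_zero_iff.mpr x.ne_zero

lemma cnt_mul (x y : Kˣ) : cnt (x * y) = cnt x + cnt y := by
  ext v
  rw [Finsupp.add_apply, cnt_apply, cnt_apply, cnt_apply, Units.val_mul,
    ← spanSingleton_mul_spanSingleton,
    FractionalIdeal.count_mul K v (span_unit_ne_zero x) (span_unit_ne_zero y)]


/-- The counting map as a monoid hom. -/
noncomputable def F1 : Kˣ →* Multiplicative (HeightOneSpectrum (𝓞 K) →₀ ℤ) :=
  MonoidHom.mk' (fun x => Multiplicative.ofAdd (cnt x)) (fun x y => by
    show Multiplicative.ofAdd (cnt (x * y)) = Multiplicative.ofAdd (cnt x) * Multiplicative.ofAdd (cnt y)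
    rw [cnt_mul]; rfl)

lemma F1_ker (x : Kˣ) (hx : x ∈ (Units.map (algebraMap (𝓞 K) K).toMonoidHom).range) :
    F1 x = 1 := by
  obtain ⟨u, hu⟩ := hx
  have hxcoe : (x : K) = algebraMap (𝓞 K) K ↑u := by rw [← hu]; rfl
  have hspan : spanSingleton (𝓞 K)⁰ (x : K) = 1 := by
    rw [hxcoe, ← coeIdeal_span_singleton,
      Ideal.span_singleton_eq_top.mpr u.isUnit, coeIdeal_top]
  have hcnt : cnt x = 0 := by
    ext v
    rw [cnt_apply, hspan, FractionalIdeal.count_one, Finsupp.coe_zero, Pi.zero_apply]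
  show Multiplicative.ofAdd (cnt x) = 1
  rw [hcnt]; rfl

lemma F1_eq_one_imp (x : Kˣ) (hx : F1 x = 1) :
    x ∈ (Units.map (algebraMap (𝓞 K) K).toMonoidHom).range := by
  haveI : NoZeroSMulDivisors (𝓞 K) K :=
    ⟨fun {c y} h => by
      rw [Algebra.smul_def, mul_eq_zero,
        map_eq_zero_iff _ (IsFractionRing.injective (𝓞 K) K)] at h
      exact h⟩
  have hcnt : cnt x = 0 := by
    have := congrArg Multiplicative.toAdd hx
    exact this
  have hzero : ∀ v : HeightOneSpectrum (𝓞 K),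
      FractionalIdeal.count K v (spanSingleton (𝓞 K)⁰ (x : K)) = 0 := by
    intro v
    rw [← cnt_apply, hcnt, Finsupp.coe_zero, Pi.zero_apply]
  have hspan : spanSingleton (𝓞 K)⁰ (x : K) = 1 := by
    rw [← FractionalIdeal.finprod_heightOneSpectrum_factorization' (K := K) (span_unit_ne_zero x)]
    rw [show (fun v : HeightOneSpectrum (𝓞 K) =>
        (v.asIdeal : FractionalIdeal (𝓞 K)⁰ K) ^
          (FractionalIdeal.count K v (spanSingleton (𝓞 K)⁰ (x : K)))) =
        fun v : HeightOneSpectrum (𝓞 K) => 1 from funext fun v => by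
      rw [hzero v, zpow_zero]]
    exact finprod_one
  rw [← spanSingleton_one (S := (𝓞 K)⁰) (P := K)] at hspan
  obtain ⟨z, hz⟩ := spanSingleton_eq_spanSingleton.mp hspan
  have h1 : algebraMap (𝓞 K) K ↑z * (x : K) = 1 := by
    rw [← Algebra.smul_def]; exact hz
  have h2 : algebraMap (𝓞 K) K ↑(z⁻¹) * algebraMap (𝓞 K) K ↑z = 1 := by
    rw [← _root_.map_mul, Units.inv_mul, _root_.map_one]
  refine ⟨z⁻¹, Units.ext ?_⟩
  show algebraMap (𝓞 K) K ↑(z⁻¹) = (x : K)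
  rw [eq_inv_of_mul_eq_one_left h2, eq_inv_of_mul_eq_one_right h1]

end NF

/-- The quotient map `Kˣ → Kˣ/𝓞 Kˣ` admits a multiplicative cross section which maps the
classes of nonzero algebraic integers (i.e. nonzero principal integral ideals) back into
the algebraic integers. -/
theorem exists_multiplicative_cross_section
    (K : Type*) [Field K] [NumberField K] :
    haveI : ((Units.map (algebraMap (𝓞 K) K).toMonoidHom).range).Normal :=
      Subgroup.normal_of_comm _
    ∃ s : (Kˣ ⧸ (Units.map (algebraMap (𝓞 K) K).toMonoidHom).range) →* Kˣ,
      ((QuotientGroup.mk' (Units.map (algebraMap (𝓞 K) K).toMonoidHom).range).comp s =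
        MonoidHom.id _) ∧
      ∀ x : Kˣ, ((x : K) ∈ Set.range (algebraMap (𝓞 K) K)) →
        ((s (QuotientGroup.mk x) : Kˣ) : K) ∈ Set.range (algebraMap (𝓞 K) K) := by
  classical
  set N := (Units.map (algebraMap (𝓞 K) K).toMonoidHom).range with hN
  let πA : Additive Kˣ →+ Additive (Kˣ ⧸ N) := MonoidHom.toAdditive (QuotientGroup.mk' N)
  have hπA : Function.Surjective πA := by
    intro b
    obtain ⟨x, hx⟩ := QuotientGroup.mk'_surjective N (Additive.toMul b)
    exact ⟨Additive.ofMul x, congrArg Additive.ofMul hx⟩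
  let F2 : (Kˣ ⧸ N) →* Multiplicative (HeightOneSpectrum (𝓞 K) →₀ ℤ) :=
    QuotientGroup.lift N F1 F1_ker
  have hF2inj : Function.Injective F2 := by
    rw [injective_iff_map_eq_one]
    intro q hq
    obtain ⟨x, rfl⟩ := QuotientGroup.mk'_surjective N q
    exact (QuotientGroup.eq_one_iff x).mpr (F1_eq_one_imp x hq)
  let fA : Additive (Kˣ ⧸ N) →+ (HeightOneSpectrum (𝓞 K) →₀ ℤ) :=
    AddMonoidHom.mk' (fun q => Multiplicative.toAdd (F2 (Additive.toMul q)))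
      (fun a b => congrArg Multiplicative.toAdd (map_mul F2 (Additive.toMul a) (Additive.toMul b)))
  have hfA : Function.Injective fA := by
    intro a b h
    exact Additive.toMul.injective (hF2inj (Multiplicative.toAdd.injective h))
  obtain ⟨σ₀, hσ₀⟩ := @exists_section_of_embeds_finsupp (Additive Kˣ) (Additive (Kˣ ⧸ N))
    (HeightOneSpectrum (𝓞 K)) _ _ πA fA hπA hfA
  refine ⟨MonoidHom.toAdditive.symm σ₀, ?_, ?_⟩
  · ext q
    exact congrArg Additive.toMul (hσ₀ (Additive.ofMul q))
  · intro x hx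
    obtain ⟨y, hy⟩ := hx
    set s : (Kˣ ⧸ N) →* Kˣ := MonoidHom.toAdditive.symm σ₀ with hsdef
    have h2 : (QuotientGroup.mk (s (QuotientGroup.mk x)) : Kˣ ⧸ N) = QuotientGroup.mk x :=
      congrArg Additive.toMul (hσ₀ (Additive.ofMul (QuotientGroup.mk x)))
    have h3 : x⁻¹ * s (QuotientGroup.mk x) ∈ N := (QuotientGroup.eq (s := N)).mp h2.symm
    obtain ⟨u, hu⟩ := h3
    have hs : s (QuotientGroup.mk x) = x * Units.map (algebraMap (𝓞 K) K).toMonoidHom u := by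
      rw [hu, mul_inv_cancel_left]
    refine ⟨y * ↑u, ?_⟩
    rw [_root_.map_mul, hy, hs]
    rfl
end
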